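/- Regard a discrete gradient vector field V on a hypergraph H as an R-linear map V : R(H)_n → R(H)_{n+1} sending α to −⟨∂β,α⟩β when {α < β} ∈ V and to 0 otherwise, where ⟨∂β,α⟩ = ±1 is the incidence number. Then V is proper (each hyperedge appears in at most one pair) if and only if V ∘ V = 0 as a linear map. -/

import Mathlib

/-- A discrete gradient vector field on a hypergraph `H`: a collection of pairs
`α < β` of hyperedges with `dim β = dim α + 1`, admitting no nontrivial closed V-path
`α₀, β₀, α₁, β₁, …, α_r, β_r, α_{r+1} = α₀` where each `(α_i, β_i)` is a pair of `W` and
`α_{i+1} ≠ α_i` is a codimension-one face of `β_i`. -/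
def IsGVF {V : Type*} [LinearOrder V] (H : Set (Finset V))
    (W : Set (Finset V × Finset V)) : Prop :=
  (∀ p ∈ W, p.1 ∈ H ∧ p.2 ∈ H ∧ p.1 ⊂ p.2 ∧ p.2.card = p.1.card + 1) ∧
  ¬ ∃ (r : ℕ) (α β : ℕ → Finset V),
      (∀ i ≤ r, (α i, β i) ∈ W ∧ α (i + 1) ≠ α i ∧ α (i + 1) ⊂ β i ∧
        (β i).card = (α (i + 1)).card + 1) ∧
      α (r + 1) = α 0

/-- A proper discrete gradient vector field: every hyperedge appears in at most one pair. -/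
def IsProperGVF {V : Type*} [LinearOrder V] (W : Set (Finset V × Finset V)) : Prop :=
  ∀ p ∈ W, ∀ q ∈ W, p ≠ q → p.1 ≠ q.1 ∧ p.1 ≠ q.2 ∧ p.2 ≠ q.1 ∧ p.2 ≠ q.2

/-- The incidence number `⟨∂β, α⟩` of a codimension-one face `α` of `β` (the simplicial sign
determined by the position of the removed vertex in the ordering of the vertices of `β`). -/
def incid {V : Type*} [LinearOrder V] (b a : Finset V) : ℤ :=
  ∑ v ∈ b \ a, (-1 : ℤ) ^ ((a.filter (fun x => x < v)).card)

lemma incid_pm {V : Type*} [LinearOrder V] {a b : Finset V} (h : a ⊂ b)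
    (hc : b.card = a.card + 1) : incid b a = 1 ∨ incid b a = -1 := by
  have h1 : (b \ a).card = 1 := by
    rw [Finset.card_sdiff_of_subset h.subset, hc]; simp
  obtain ⟨v, hv⟩ := Finset.card_eq_one.mp h1
  unfold incid
  rw [hv, Finset.sum_singleton]
  rcases Nat.even_or_odd ((a.filter (fun x => x < v)).card) with he | he
  · left; exact he.neg_one_pow
  · right; exact he.neg_one_pow

lemma pm_cast_ne {R : Type*} [Ring R] [Nontrivial R] {c : ℤ} (h : c = 1 ∨ c = -1) :
    (c : R) ≠ 0 := by
  rcases h with h | h <;> simp [h]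

lemma pm_neg {c : ℤ} (h : c = 1 ∨ c = -1) : -c = 1 ∨ -c = -1 := by
  rcases h with h | h <;> simp [h]

lemma pm_mul {c d : ℤ} (h : c = 1 ∨ c = -1) (h' : d = 1 ∨ d = -1) :
    c * d = 1 ∨ c * d = -1 := by
  rcases h with h | h <;> rcases h' with h' | h' <;> simp [h, h']

/-- A discrete gradient vector field `Vf` on a hypergraph `H`, regarded as the `R`-linear map
`W` sending `α` to `−⟨∂β,α⟩·β` when `(α, β) ∈ Vf` and to `0` otherwise, is proper if and only
if `W ∘ W = 0`. -/
theorem properGVF_iff_comp_self_eq_zero {V : Type*} [LinearOrder V]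
    (R : Type*) [CommRing R] [Nontrivial R] (H : Set (Finset V))
    (Vf : Set (Finset V × Finset V)) (hgvf : IsGVF H Vf)
    (W : (Finset V →₀ R) →ₗ[R] (Finset V →₀ R))
    (hW1 : ∀ p ∈ Vf, W (Finsupp.single p.1 (1 : R)) =
      (-(incid p.2 p.1)) • Finsupp.single p.2 (1 : R))
    (hW2 : ∀ s : Finset V, (∀ b : Finset V, (s, b) ∉ Vf) →
      W (Finsupp.single s (1 : R)) = 0) :
    IsProperGVF Vf ↔ W ∘ₗ W = 0 := by
  have hpm : ∀ p ∈ Vf, -(incid p.2 p.1) = 1 ∨ -(incid p.2 p.1) = -1 := fun p hp =>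
    pm_neg (incid_pm (hgvf.1 p hp).2.2.1 (hgvf.1 p hp).2.2.2)
  constructor
  · intro hproper
    apply Finsupp.lhom_ext
    intro s r
    simp only [LinearMap.comp_apply, LinearMap.zero_apply]
    have hs : Finsupp.single s r = r • Finsupp.single s (1 : R) := by
      rw [Finsupp.smul_single, smul_eq_mul, mul_one]
    rw [hs, map_smul, map_smul]
    suffices h : W (W (Finsupp.single s (1 : R))) = 0 by rw [h, smul_zero]
    by_cases hex : ∃ b, (s, b) ∈ Vf
    · obtain ⟨b, hb⟩ := hex
      rw [hW1 (s, b) hb, map_zsmul]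
      have hb0 : W (Finsupp.single b (1 : R)) = 0 := by
        apply hW2
        intro g hg
        have hne : (s, b) ≠ (b, g) := by
          intro h
          exact (hgvf.1 (s, b) hb).2.2.1.ne (congrArg Prod.fst h)
        exact (hproper (s, b) hb (b, g) hg hne).2.2.1 rfl
      rw [hb0, smul_zero]
    · push_neg at hex
      rw [hW2 s hex, map_zero]
  · intro hcomp
    -- key: no chain (a,b), (b,c) in Vf
    have key : ∀ x ∈ Vf, ∀ y ∈ Vf, x.2 ≠ y.1 := by
      intro x hx y hy h
      have h0 : (W ∘ₗ W) (Finsupp.single x.1 (1 : R)) = 0 := by rw [hcomp]; rfl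
      rw [LinearMap.comp_apply, hW1 x hx, map_zsmul, h, hW1 y hy, smul_smul] at h0
      have := DFunLike.congr_fun h0 y.2
      simp only [Finsupp.smul_apply, Finsupp.single_eq_same, Finsupp.coe_zero,
        Pi.zero_apply, zsmul_eq_mul, mul_one] at this
      have hx' := hpm x hx
      rw [h] at hx'
      exact pm_cast_ne (R := R) (pm_mul hx' (hpm y hy)) this
    intro p hp q hq hne
    refine ⟨?_, fun h => key q hq p hp h.symm, fun h => key p hp q hq h, ?_⟩
    · intro h1
      have h2 : p.2 ≠ q.2 := fun h2 => hne (Prod.ext h1 h2)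
      have e : (-(incid p.2 p.1)) • Finsupp.single p.2 (1 : R) =
          (-(incid q.2 q.1)) • Finsupp.single q.2 (1 : R) := by
        rw [← hW1 p hp, ← hW1 q hq, h1]
      have := DFunLike.congr_fun e p.2
      simp only [Finsupp.smul_apply, Finsupp.single_eq_same,
        Finsupp.single_eq_of_ne' (Ne.symm h2), smul_zero, zsmul_eq_mul, mul_one] at this
      exact pm_cast_ne (hpm p hp) this
    · intro h42
      have h1 : p.1 ≠ q.1 := fun h1 => hne (Prod.ext h1 h42)
      apply hgvf.2
      refine ⟨1, fun i => if Even i then p.1 else q.1, fun _ => p.2, ?_, ?_⟩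
      · intro i hi
        interval_cases i
        · refine ⟨by simpa using hp, by simp [h1.symm], ?_, ?_⟩
          · simpa [h42] using (hgvf.1 q hq).2.2.1
          · simpa [h42] using (hgvf.1 q hq).2.2.2
        · refine ⟨?_, by simp [h1], by simpa using (hgvf.1 p hp).2.2.1,
            by simpa using (hgvf.1 p hp).2.2.2⟩
          simpa [h42] using hq
      · simp
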